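/- arXiv:2110.10676 — 2 statements merged into one kernel-verified Lean document; each statement's English description precedes it below -/
import Mathlib

section
/- Let X be a finite connected poset and F a field with char(F) ≠ 2. Then every bijective F-linear map φ: I(X,F) → I(X,F) that preserves idempotents is either an automorphism of I(X,F) or an anti-automorphism of I(X,F). -/
open IncidenceAlgebra

/-- A poset is connected if any two elements can be joined by a sequence of elements
in which consecutive elements are comparable. -/
def PosetConnected (X : Type*) [PartialOrder X] : Prop :=
  ∀ x y : X, Relation.ReflTransGen (fun a b : X => a ≤ b ∨ b ≤ a) x y


open Finset

namespace StmtAux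

/-- `≤` is decidable in a locally finite order. -/
instance (priority := low) decLE {X : Type*} [Preorder X] [LocallyFiniteOrder X]
    [DecidableEq X] : DecidableRel ((· ≤ ·) : X → X → Prop) := fun a b =>
  decidable_of_iff (a ∈ Finset.Icc a b) (by simp)

variable {X : Type*} [PartialOrder X] [LocallyFiniteOrder X] [DecidableEq X]
variable {F : Type*} [Field F]

/-- Matrix unit of the incidence algebra. Zero unless `x ≤ y`. -/
def E (F : Type*) [Field F] {X : Type*} [PartialOrder X] [LocallyFiniteOrder X]
    [DecidableEq X] (x y : X) :
    IncidenceAlgebra F X :=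
  ⟨fun a b => if a = x ∧ b = y ∧ x ≤ y then 1 else 0, by
    intro a b hab
    simp only [ite_eq_right_iff, one_ne_zero]
    rintro ⟨rfl, rfl, h⟩
    exact absurd h hab⟩

@[simp] lemma E_apply (x y a b : X) :
    (E F x y) a b = if a = x ∧ b = y ∧ x ≤ y then 1 else 0 := rfl

lemma E_ne_zero {x y : X} (h : x ≤ y) : (E F x y) ≠ 0 := by
  intro h0
  have : (E F x y) x y = 0 := by rw [h0]; rfl
  simp [h] at this

lemma E_mul_E (x y z w : X) (hxy : x ≤ y) (hzw : z ≤ w) :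
    (E F x y) * (E F z w) = if y = z then E F x w else 0 := by
  ext a b hab
  rw [mul_apply]
  have key : ∀ c ∈ Finset.Icc a b, (E F x y) a c * (E F z w) c b
      = if c = y then (if y = z ∧ a = x ∧ b = w then (1 : F) else 0) else 0 := by
    intro c hc
    simp only [E_apply]
    split_ifs <;> simp_all
  rw [Finset.sum_congr rfl key, Finset.sum_ite_eq' (Finset.Icc a b) y]
  have hrhs : (if y = z then E F x w else 0) a b
      = if y = z ∧ a = x ∧ b = w then (1 : F) else 0 := by
    split_ifs with h1 h2 h3
    · rcases h2 with ⟨hyz, rfl, rfl⟩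
      simp [le_trans hxy (h1 ▸ hzw)]
    · simp only [E_apply]
      rw [if_neg]
      intro hcon
      exact h2 ⟨h1, hcon.1, hcon.2.1⟩
    · exact absurd h3.1 h1
    · rfl
  rw [hrhs]
  by_cases hmem : y ∈ Finset.Icc a b
  · rw [if_pos hmem]
  · rw [if_neg hmem, eq_comm]
    rw [if_neg]
    rintro ⟨rfl, rfl, rfl⟩
    exact hmem (Finset.mem_Icc.2 ⟨hxy, hzw⟩)

/-- Diagonal idempotent. -/
abbrev ee (F : Type*) [Field F] {X : Type*} [PartialOrder X] [LocallyFiniteOrder X]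
    [DecidableEq X] (x : X) :
    IncidenceAlgebra F X := E F x x

lemma ee_mul_apply (z : X) (f : IncidenceAlgebra F X) (a b : X) :
    (ee F z * f) a b = if a = z then f a b else 0 := by
  rw [mul_apply]
  by_cases h : a = z
  · subst h
    rw [if_pos rfl]
    by_cases hab : a ≤ b
    · rw [Finset.sum_eq_single a]
      · simp
      · intro c hc hca; simp only [E_apply]
        rw [if_neg (by tauto)]; ring
      · intro ha; exact absurd (Finset.mem_Icc.2 ⟨le_refl a, hab⟩) ha
    · rw [apply_eq_zero_of_not_le hab]
      exact Finset.sum_eq_zero fun c hc => by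
        rw [Finset.mem_Icc] at hc; simp only [E_apply]
        split_ifs with h1 <;> simp_all
  · rw [if_neg h]
    exact Finset.sum_eq_zero fun c hc => by
      simp only [E_apply]; split_ifs with h1 <;> simp_all

lemma mul_ee_apply (z : X) (f : IncidenceAlgebra F X) (a b : X) :
    (f * ee F z) a b = if b = z then f a b else 0 := by
  rw [mul_apply]
  by_cases h : b = z
  · subst h
    rw [if_pos rfl]
    by_cases hab : a ≤ b
    · rw [Finset.sum_eq_single b]
      · simp
      · intro c hc hcb; simp [hcb]
      · intro ha; exact absurd (Finset.mem_Icc.2 ⟨hab, le_refl b⟩) ha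
    · rw [apply_eq_zero_of_not_le hab]
      exact Finset.sum_eq_zero fun c hc => by
        rw [Finset.mem_Icc] at hc; simp only [E_apply]
        split_ifs with h1 <;> simp_all
  · rw [if_neg h]
    exact Finset.sum_eq_zero fun c hc => by
      simp only [E_apply]; split_ifs with h1 <;> simp_all

lemma sum_apply {ι : Type*} (s : Finset ι) (f : ι → IncidenceAlgebra F X) (a b : X) :
    (∑ i ∈ s, f i) a b = ∑ i ∈ s, f i a b := by
  classical
  induction s using Finset.induction with
  | empty => simp [IncidenceAlgebra.zero_apply]
  | insert _ _ h ih => simp [Finset.sum_insert h, IncidenceAlgebra.add_apply, ih]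

lemma smul_apply' (c : F) (f : IncidenceAlgebra F X) (a b : X) :
    (c • f) a b = c * f a b := rfl

section CharHelpers
variable {F : Type*} [Field F]

lemma half_smul {M : Type*} [AddCommGroup M] [Module F M] (hF : (2 : F) ≠ 0)
    {a : M} (h : a + a = 0) : a = 0 := by
  have h2 : (2 : F) • a = 0 := by rw [two_smul]; exact h
  have h3 := congrArg (fun m => (2 : F)⁻¹ • m) h2
  simpa [smul_smul, inv_mul_cancel₀ hF] using h3

lemma eq_of_double {M : Type*} [AddCommGroup M] [Module F M] (hF : (2 : F) ≠ 0)
    {a b : M} (h : a + a = b + b) : a = b := by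
  have h0 : (a - b) + (a - b) = 0 := by
    have : (a - b) + (a - b) = (a + a) - (b + b) := by abel
    rw [this, h, sub_self]
  exact sub_eq_zero.1 (half_smul hF h0)

end CharHelpers

lemma basis_expand (f : IncidenceAlgebra F X) [Fintype X] :
    f = ∑ p : X × X, f p.1 p.2 • E F p.1 p.2 := by
  ext a b hab
  rw [sum_apply]
  rw [Finset.sum_eq_single (a, b)]
  · simp [smul_apply', hab]
  · rintro ⟨c, d⟩ _ hcd
    simp only [smul_apply', E_apply]
    rw [if_neg]
    · ring
    · rintro ⟨rfl, rfl, -⟩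
      exact hcd rfl
  · intro h
    exact absurd (Finset.mem_univ _) h

lemma diag_pow_zero (f : IncidenceAlgebra F X) (hf : ∀ z, f z z = 0) :
    ∀ (k : ℕ) (p q : X), (Finset.Icc p q).card ≤ k → (f ^ k) p q = 0 := by
  intro k
  induction k with
  | zero =>
    intro p q hpq
    rw [pow_zero]
    have hnotle : ¬ p ≤ q := by
      intro hle
      have : p ∈ Finset.Icc p q := Finset.mem_Icc.2 ⟨le_refl p, hle⟩
      have := Finset.card_pos.2 ⟨p, this⟩
      omega
    exact apply_eq_zero_of_not_le hnotle _
  | succ k ih =>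
    intro p q hpq
    rw [pow_succ']
    rw [mul_apply]
    refine Finset.sum_eq_zero fun c hc => ?_
    rw [Finset.mem_Icc] at hc
    by_cases hcp : c = p
    · rw [hcp, hf p, zero_mul]
    · have hpc : p < c := lt_of_le_of_ne hc.1 (Ne.symm hcp)
      have hsub : Finset.Icc c q ⊆ Finset.Icc p q := by
        intro t ht
        rw [Finset.mem_Icc] at ht ⊢
        exact ⟨le_trans hc.1 ht.1, ht.2⟩
      have hss : Finset.Icc c q ⊂ Finset.Icc p q := by
        refine ⟨hsub, fun hcon => ?_⟩
        have hp : p ∈ Finset.Icc c q := hcon (Finset.mem_Icc.2 ⟨le_refl p, le_trans hc.1 hc.2⟩)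
        rw [Finset.mem_Icc] at hp
        exact absurd hp.1 (not_le_of_gt hpc)
      have hcard : (Finset.Icc c q).card < (Finset.Icc p q).card := Finset.card_lt_card hss
      rw [ih c q (by omega), mul_zero]

lemma nilpotent_of_diag_zero [Fintype X] (f : IncidenceAlgebra F X) (hf : ∀ z, f z z = 0) :
    f ^ (Fintype.card X + 1) = 0 := by
  ext p q _
  rw [IncidenceAlgebra.zero_apply]
  refine diag_pow_zero f hf _ p q ?_
  have := Finset.card_le_univ (Finset.Icc p q)
  omega

lemma idem_pow (f : IncidenceAlgebra F X) (hf : f * f = f) (k : ℕ) : f ^ (k + 1) = f := by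
  induction k with
  | zero => rw [pow_one]
  | succ k ih => rw [pow_succ, ih, hf]

lemma diag_mul (f g : IncidenceAlgebra F X) (z : X) : (f * g) z z = f z z * g z z := by
  rw [mul_apply, Finset.Icc_self, Finset.sum_singleton]

lemma E_eq_zero_of_not_le {x y : X} (h : ¬ x ≤ y) : (E F x y) = 0 := by
  ext a b _
  simp only [E_apply, IncidenceAlgebra.zero_apply]
  rw [if_neg]
  rintro ⟨-, -, hc⟩
  exact h hc

section Key
variable [Fintype X]

lemma key_mul (ψ : IncidenceAlgebra F X →ₗ[F] IncidenceAlgebra F X) (θ : X → X)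
    (hinj : Function.Injective θ) (c : X → X → F)
    (hE : ∀ x y, x ≤ y → ψ (E F x y) = c x y • E F (θ x) (θ y))
    (hmono : ∀ {x y : X}, x ≤ y → θ x ≤ θ y)
    (hco : ∀ x y z : X, x ≤ y → y ≤ z → c x z = c x y * c y z) :
    ∀ a b : IncidenceAlgebra F X, ψ (a * b) = ψ a * ψ b := by
  have hbase : ∀ p q r s : X, ψ (E F p q * E F r s) = ψ (E F p q) * ψ (E F r s) := by
    intro p q r s
    by_cases hpq : p ≤ q
    · by_cases hrs : r ≤ s
      · rw [E_mul_E p q r s hpq hrs]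
        by_cases h : q = r
        · subst h
          rw [if_pos rfl, hE p s (le_trans hpq hrs), hE p q hpq, hE q s hrs,
            smul_mul_smul_comm, E_mul_E _ _ _ _ (hmono hpq) (hmono hrs), if_pos rfl,
            hco p q s hpq hrs]
        · rw [if_neg h, map_zero, hE p q hpq, hE r s hrs, smul_mul_smul_comm,
            E_mul_E _ _ _ _ (hmono hpq) (hmono hrs), if_neg (fun hc => h (hinj hc)), smul_zero]
      · rw [E_eq_zero_of_not_le hrs, mul_zero]
        simp
    · rw [E_eq_zero_of_not_le hpq, zero_mul]
      simp
  intro a b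
  rw [basis_expand (f := a), basis_expand (f := b), Finset.sum_mul_sum]
  simp only [smul_mul_smul_comm, map_sum, map_smul, hbase]
  rw [Finset.sum_mul_sum]
  simp only [smul_mul_smul_comm]

lemma key_antimul (ψ : IncidenceAlgebra F X →ₗ[F] IncidenceAlgebra F X) (θ : X → X)
    (hinj : Function.Injective θ) (c : X → X → F)
    (hE : ∀ x y, x ≤ y → ψ (E F x y) = c x y • E F (θ y) (θ x))
    (hmono : ∀ {x y : X}, x ≤ y → θ y ≤ θ x)
    (hco : ∀ x y z : X, x ≤ y → y ≤ z → c x z = c x y * c y z) :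
    ∀ a b : IncidenceAlgebra F X, ψ (a * b) = ψ b * ψ a := by
  have hbase : ∀ p q r s : X, ψ (E F p q * E F r s) = ψ (E F r s) * ψ (E F p q) := by
    intro p q r s
    by_cases hpq : p ≤ q
    · by_cases hrs : r ≤ s
      · rw [E_mul_E p q r s hpq hrs]
        by_cases h : q = r
        · subst h
          rw [if_pos rfl, hE p s (le_trans hpq hrs), hE p q hpq, hE q s hrs,
            smul_mul_smul_comm, E_mul_E _ _ _ _ (hmono hrs) (hmono hpq), if_pos rfl,
            hco p q s hpq hrs, mul_comm (c p q)]
        · rw [if_neg h, map_zero, hE p q hpq, hE r s hrs, smul_mul_smul_comm,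
            E_mul_E _ _ _ _ (hmono hrs) (hmono hpq),
            if_neg (fun hc => h (hinj hc).symm), smul_zero]
      · rw [E_eq_zero_of_not_le hrs, mul_zero]
        simp
    · rw [E_eq_zero_of_not_le hpq, zero_mul]
      simp
  intro a b
  rw [basis_expand (f := a), basis_expand (f := b), Finset.sum_mul_sum]
  simp only [smul_mul_smul_comm, map_sum, map_smul, hbase]
  rw [Finset.sum_mul_sum, Finset.sum_comm]
  refine Finset.sum_congr rfl fun p _ => Finset.sum_congr rfl fun q _ => ?_
  rw [mul_comm (a q.1 q.2) (b p.1 p.2), smul_mul_smul_comm]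

end Key

section Jordan
variable {F : Type*} [Field F] {A : Type*} [Ring A] [Module F A]

lemma jordan_sq (hF : (2 : F) ≠ 0) {p g : A} (hp : p * p = p)
    (h1 : (p + g) * (p + g) = p + g) (h2 : (p - g) * (p - g) = p - g) :
    g * g = 0 ∧ p * g + g * p = g := by
  have hexp1 : (p + g) * (p + g) = p * p + (p * g + g * p) + g * g := by noncomm_ring
  rw [hp] at hexp1
  have e1 : (p * g + g * p) + g * g = (p + g) * (p + g) - p := by rw [hexp1]; abel
  rw [h1, show p + g - p = g from by abel] at e1
  have hexp2 : (p - g) * (p - g) = p * p - (p * g + g * p) + g * g := by noncomm_ring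
  rw [hp] at hexp2
  have e2 : g * g - (p * g + g * p) = (p - g) * (p - g) - p := by rw [hexp2]; abel
  rw [h2, show p - g - p = -g from by abel] at e2
  have h4 : g * g + g * g = 0 := by
    calc g * g + g * g = ((p * g + g * p) + g * g) + (g * g - (p * g + g * p)) := by abel
    _ = g + -g := by rw [e1, e2]
    _ = 0 := by abel
  have hgg : g * g = 0 := half_smul hF h4
  refine ⟨hgg, ?_⟩
  rw [hgg, add_zero] at e1
  exact e1

lemma jordan_orth {p q g : A} (hp : p * p = p) (hq : q * q = q)
    (hpq : p * q = 0) (hqp : q * p = 0) (hqg : q * g + g * q = g) (hgg : g * g = 0)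
    (h1 : (p + q + g) * (p + q + g) = p + q + g) :
    p * g + g * p = 0 := by
  have hexp : (p + q + g) * (p + q + g)
      = p * p + (p * q + q * p) + q * q + (q * g + g * q) + (p * g + g * p) + g * g := by
    noncomm_ring
  rw [hp, hq, hpq, hqp, hqg, hgg] at hexp
  have h' : p * g + g * p = (p + q + g) * (p + q + g) - (p + q + g) := by rw [hexp]; abel
  rw [h1, sub_self] at h'
  exact h'

lemma jordan_two {p g h : A} (hp : p * p = p)
    (hpg : p * g + g * p = g) (hph : p * h + h * p = h)
    (hgg : g * g = 0) (hhh : h * h = 0)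
    (h1 : (p + g + h) * (p + g + h) = p + g + h) :
    g * h + h * g = 0 := by
  have hexp : (p + g + h) * (p + g + h)
      = p * p + (p * g + g * p) + (p * h + h * p) + (g * h + h * g) + g * g + h * h := by
    noncomm_ring
  rw [hp, hpg, hph, hgg, hhh] at hexp
  have h' : g * h + h * g = (p + g + h) * (p + g + h) - (p + g + h) := by rw [hexp]; abel
  rw [h1, sub_self] at h'
  exact h'

lemma jordan_chain (hF : (2 : F) ≠ 0) {p g h k : A} (hp : p * p = p)
    (hpg : p * g + g * p = g) (hph : p * h + h * p = h) (hpk : p * k + k * p = 0)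
    (hgg : g * g = 0) (hhh : h * h = 0) (hkk : k * k = 0)
    (h1 : (p + g + h + k) * (p + g + h + k) = p + g + h + k)
    (h2 : (p + g - h - k) * (p + g - h - k) = p + g - h - k)
    (h3 : (p - g + h - k) * (p - g + h - k) = p - g + h - k) :
    g * h + h * g = k := by
  have hexp1 : (p + g + h + k) * (p + g + h + k)
      = p * p + (p * g + g * p) + (p * h + h * p) + (p * k + k * p)
        + (g * h + h * g) + (g * k + k * g) + (h * k + k * h) + g * g + h * h + k * k := by
    noncomm_ring
  rw [hp, hpg, hph, hpk, hgg, hhh, hkk] at hexp1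
  have e1 : (g * h + h * g) + (g * k + k * g) + (h * k + k * h)
      = (p + g + h + k) * (p + g + h + k) - (p + g + h) := by rw [hexp1]; abel
  rw [h1, show p + g + h + k - (p + g + h) = k from by abel] at e1
  have hexp2 : (p + g - h - k) * (p + g - h - k)
      = p * p + (p * g + g * p) - (p * h + h * p) - (p * k + k * p)
        - (g * h + h * g) - (g * k + k * g) + (h * k + k * h) + g * g + h * h + k * k := by
    noncomm_ring
  rw [hp, hpg, hph, hpk, hgg, hhh, hkk] at hexp2
  have e2 : (h * k + k * h) - (g * h + h * g) - (g * k + k * g)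
      = (p + g - h - k) * (p + g - h - k) - (p + g - h) := by rw [hexp2]; abel
  rw [h2, show p + g - h - k - (p + g - h) = -k from by abel] at e2
  have hexp3 : (p - g + h - k) * (p - g + h - k)
      = p * p - (p * g + g * p) + (p * h + h * p) - (p * k + k * p)
        - (g * h + h * g) + (g * k + k * g) - (h * k + k * h) + g * g + h * h + k * k := by
    noncomm_ring
  rw [hp, hpg, hph, hpk, hgg, hhh, hkk] at hexp3
  have e3 : (g * k + k * g) - (g * h + h * g) - (h * k + k * h)
      = (p - g + h - k) * (p - g + h - k) - (p - g + h) := by rw [hexp3]; abel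
  rw [h3, show p - g + h - k - (p - g + h) = -k from by abel] at e3
  have hC : (h * k + k * h) + (h * k + k * h) = 0 := by
    calc (h * k + k * h) + (h * k + k * h)
        = ((g * h + h * g) + (g * k + k * g) + (h * k + k * h))
          + ((h * k + k * h) - (g * h + h * g) - (g * k + k * g)) := by abel
    _ = k + -k := by rw [e1, e2]
    _ = 0 := by abel
  have hC0 : h * k + k * h = 0 := half_smul hF hC
  have hB : (g * k + k * g) + (g * k + k * g) = 0 := by
    calc (g * k + k * g) + (g * k + k * g)
        = ((g * h + h * g) + (g * k + k * g) + (h * k + k * h))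
          + ((g * k + k * g) - (g * h + h * g) - (h * k + k * h)) := by abel
    _ = k + -k := by rw [e1, e3]
    _ = 0 := by abel
  have hB0 : g * k + k * g = 0 := half_smul hF hB
  rw [hB0, hC0, add_zero, add_zero] at e1
  exact e1

end Jordan


end StmtAux

open StmtAux

set_option maxHeartbeats 2000000 in
/-- over a field of characteristic `≠ 2`, every bijective linear idempotent
preserver of the incidence algebra of a finite connected poset is an automorphism or an
anti-automorphism. -/
theorem stmt_0 {X : Type*} [PartialOrder X] [Fintype X] [LocallyFiniteOrder X] [DecidableEq X]
    {F : Type*} [Field F] (hchar : ringChar F ≠ 2)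
    (hconn : PosetConnected X)
    (φ : IncidenceAlgebra F X →ₗ[F] IncidenceAlgebra F X)
    (hbij : Function.Bijective φ)
    (hidem : ∀ f : IncidenceAlgebra F X, f * f = f → φ f * φ f = φ f) :
    (∀ f g : IncidenceAlgebra F X, φ (f * g) = φ f * φ g) ∨
      (∀ f g : IncidenceAlgebra F X, φ (f * g) = φ g * φ f) := by
  classical
  obtain ⟨hinjφ, hsurjφ⟩ := hbij
  have hF : (2 : F) ≠ 0 := by
    intro h
    have hd : ringChar F ∣ 2 := (CharP.cast_eq_zero_iff F (ringChar F) 2).1 h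
    rcases (Nat.dvd_prime Nat.prime_two).1 hd with h1 | h2
    · exact CharP.ringChar_ne_one h1
    · exact hchar h2
  -- diagonal idempotents and their images
  set f : X → IncidenceAlgebra F X := fun x => φ (ee F x) with hfdef
  have hee_idem : ∀ x : X, (ee F x) * ee F x = ee F x := fun x => by
    rw [E_mul_E x x x x le_rfl le_rfl, if_pos rfl]
  have hee_orth : ∀ {x y : X}, x ≠ y → (ee F x) * ee F y = 0 := fun {x y} h => by
    rw [E_mul_E x x y y le_rfl le_rfl, if_neg h]
  have hf_idem : ∀ x, f x * f x = f x := fun x => hidem _ (hee_idem x)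
  have hf_jorth : ∀ {x y : X}, x ≠ y → f x * f y + f y * f x = 0 := by
    intro x y hxy
    have hid : (ee F x + ee F y) * (ee F x + ee F y) = ee F x + ee F y := by
      rw [mul_add, add_mul, add_mul, hee_idem, hee_idem, hee_orth hxy, hee_orth (Ne.symm hxy)]
      abel
    have h2 := hidem _ hid
    rw [map_add] at h2
    have h3 : f x * f y + f y * f x = (f x + f y) * (f x + f y) - (f x + f y) := by
      rw [mul_add, add_mul, add_mul, hf_idem, hf_idem]; abel
    rw [h2, sub_self] at h3
    exact h3
  have hf_orth : ∀ {x y : X}, x ≠ y → f x * f y = 0 := by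
    intro x y hxy
    have h0 := hf_jorth hxy
    have e1 : f x * f y + f x * f y * f x = 0 := by
      have := congrArg (fun t => f x * t) h0
      simpa [mul_add, ← mul_assoc, hf_idem] using this
    have e2 : f x * f y * f x + f y * f x = 0 := by
      have := congrArg (fun t => t * f x) h0
      simpa [add_mul, mul_assoc, hf_idem] using this
    have e3 : f x * f y = f y * f x := by
      have a1 : f x * f y = -(f x * f y * f x) := by
        have : f x * f y = (f x * f y + f x * f y * f x) - f x * f y * f x := by abel
        rw [e1, zero_sub] at this; exact this
      have a2 : f y * f x = -(f x * f y * f x) := by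
        have : f y * f x = (f x * f y * f x + f y * f x) - f x * f y * f x := by abel
        rw [e2, zero_sub] at this; exact this
      rw [a1, a2]
    rw [← e3] at h0
    exact half_smul hF h0
  have hf_ne0 : ∀ x, f x ≠ 0 := by
    intro x h
    have h1 : ee F x = (0 : IncidenceAlgebra F X) :=
      hinjφ (show φ (ee F x) = φ 0 by rw [map_zero]; exact h)
    exact E_ne_zero le_rfl h1
  have hf01 : ∀ x z, f x z z = 0 ∨ f x z z = 1 := by
    intro x z
    have h1 : f x z z ^ 2 = f x z z := by
      rw [sq, ← diag_mul, hf_idem]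
    exact eq_zero_or_one_of_sq_eq_self h1
  have hex : ∀ x, ∃ z, f x z z = 1 := by
    intro x
    by_contra hcon
    push_neg at hcon
    have hz : ∀ z, f x z z = 0 := fun z => (hf01 x z).resolve_right (hcon z)
    have h1 := nilpotent_of_diag_zero (f x) hz
    rw [idem_pow (f x) (hf_idem x)] at h1
    exact hf_ne0 x h1
  set θ : X → X := fun x => Classical.choose (hex x) with hθdef
  have hθ : ∀ x, f x (θ x) (θ x) = 1 := fun x => Classical.choose_spec (hex x)
  have hθinj : Function.Injective θ := by
    intro x y hxy
    by_contra hne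
    have h1 : f y (θ x) (θ x) = 1 := by rw [hxy]; exact hθ y
    have h2 : (0 : IncidenceAlgebra F X) (θ x) (θ x)
        = f x (θ x) (θ x) * f y (θ x) (θ x) := by rw [← diag_mul, hf_orth hne]
    rw [hθ x, h1, IncidenceAlgebra.zero_apply] at h2
    simp at h2
  have hθsurj : Function.Surjective θ := Finite.surjective_of_injective hθinj
  have hfd : ∀ x z, f x z z = if z = θ x then 1 else 0 := by
    intro x z
    by_cases h : z = θ x
    · rw [if_pos h, h]; exact hθ x
    · rw [if_neg h]
      rcases hf01 x z with h0 | h1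
      · exact h0
      · exfalso
        obtain ⟨y, hy⟩ := hθsurj z
        have hne : x ≠ y := fun hc => h (by rw [hc, hy])
        have hyz : f y z z = 1 := by rw [← hy]; exact hθ y
        have h2 : (0 : IncidenceAlgebra F X) z z = f x z z * f y z z := by
          rw [← diag_mul, hf_orth hne]
        rw [h1, hyz, IncidenceAlgebra.zero_apply] at h2
        simp at h2
  -- the conjugating unit
  set u : IncidenceAlgebra F X := ∑ y : X, (ee F (θ y)) * f y with hudef
  have hudiag : ∀ z, u z z = 1 := by
    intro z
    obtain ⟨y0, hy0⟩ := hθsurj z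
    rw [hudef, StmtAux.sum_apply, Finset.sum_eq_single y0]
    · rw [ee_mul_apply, if_pos hy0.symm, hfd, if_pos hy0.symm]
    · intro y _ hy
      rw [ee_mul_apply, if_neg]
      intro hc
      exact hy (hθinj (by rw [← hc, hy0]))
    · intro hmem; exact absurd (Finset.mem_univ y0) hmem
  have hu_unit : IsUnit u := by
    have hdz : ∀ z, (u - 1) z z = 0 := by
      intro z
      rw [IncidenceAlgebra.sub_apply, hudiag, one_apply, if_pos rfl, sub_self]
    have hnil : IsNilpotent (u - 1) := ⟨Fintype.card X + 1, nilpotent_of_diag_zero _ hdz⟩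
    have h1 := hnil.isUnit_one_add
    rwa [add_sub_cancel] at h1
  obtain ⟨v, hvu, huv⟩ : ∃ v, v * u = 1 ∧ u * v = 1 :=
    ⟨↑hu_unit.unit⁻¹, hu_unit.val_inv_mul, hu_unit.mul_val_inv⟩
  have hcommute : ∀ x, u * f x = ee F (θ x) * u := by
    intro x
    have hl : u * f x = ee F (θ x) * f x := by
      rw [hudef, Finset.sum_mul, Finset.sum_eq_single x]
      · rw [mul_assoc, hf_idem]
      · intro y _ hy
        rw [mul_assoc, hf_orth hy, mul_zero]
      · intro hmem; exact absurd (Finset.mem_univ x) hmem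
    have hr : ee F (θ x) * u = ee F (θ x) * f x := by
      rw [hudef, Finset.mul_sum, Finset.sum_eq_single x]
      · rw [← mul_assoc, hee_idem]
      · intro y _ hy
        rw [← mul_assoc, hee_orth (fun hc => hy (hθinj hc).symm), zero_mul]
      · intro hmem; exact absurd (Finset.mem_univ x) hmem
    rw [hl, hr]
  -- the conjugated map
  set ψ : IncidenceAlgebra F X →ₗ[F] IncidenceAlgebra F X :=
    (LinearMap.mulRight F v).comp ((LinearMap.mulLeft F u).comp φ) with hψdef
  have hψ : ∀ a, ψ a = u * φ a * v := fun a => rfl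
  have hψidem : ∀ a, a * a = a → ψ a * ψ a = ψ a := by
    intro a ha
    have h1 : ψ a * ψ a = u * (φ a * φ a) * v := by
      rw [hψ]
      calc (u * φ a * v) * (u * φ a * v) = u * φ a * (v * u) * (φ a * v) := by noncomm_ring
      _ = u * (φ a * φ a) * v := by rw [hvu]; noncomm_ring
    rw [h1, hidem a ha, ← hψ]
  have hψinj : ∀ a, ψ a = 0 → a = 0 := by
    intro a h
    have h1 : v * (u * φ a * v) * u = φ a := by
      calc v * (u * φ a * v) * u = v * u * φ a * (v * u) := by noncomm_ring
      _ = φ a := by rw [hvu, one_mul, mul_one]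
    rw [← hψ, h] at h1
    simp only [mul_zero, zero_mul] at h1
    exact hinjφ (by rw [← h1, map_zero])
  have hψe : ∀ x, ψ (ee F x) = ee F (θ x) := by
    intro x
    rw [hψ]
    have h1 : u * φ (ee F x) * v = u * f x * v := rfl
    rw [h1, hcommute x, mul_assoc, huv, mul_one]
  -- Phase 3: per-edge relations
  have hrel : ∀ {x y : X}, x < y →
      (ψ (E F x y) * ψ (E F x y) = 0) ∧
      (ee F (θ x) * ψ (E F x y) + ψ (E F x y) * ee F (θ x) = ψ (E F x y)) ∧
      (ee F (θ y) * ψ (E F x y) + ψ (E F x y) * ee F (θ y) = ψ (E F x y)) := by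
    intro x y hxy
    have hle := le_of_lt hxy
    have hne : x ≠ y := ne_of_lt hxy
    have hxx : (ee F x) * E F x y = E F x y := by
      rw [E_mul_E x x x y le_rfl hle, if_pos rfl]
    have hxy0 : (E F x y) * ee F x = 0 := by
      rw [E_mul_E x y x x hle le_rfl, if_neg (Ne.symm hne)]
    have hyy : (E F x y) * ee F y = E F x y := by
      rw [E_mul_E x y y y hle le_rfl, if_pos rfl]
    have hyx0 : (ee F y) * E F x y = 0 := by
      rw [E_mul_E y y x y le_rfl hle, if_neg (Ne.symm hne)]
    have hEE0 : (E F x y) * E F x y = 0 := by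
      rw [E_mul_E x y x y hle hle, if_neg (Ne.symm hne)]
    have hq1 : (ee F x + E F x y) * (ee F x + E F x y) = ee F x + E F x y := by
      rw [mul_add, add_mul, add_mul, hee_idem, hxx, hxy0, hEE0]; abel
    have hq2 : (ee F x - E F x y) * (ee F x - E F x y) = ee F x - E F x y := by
      rw [mul_sub, sub_mul, sub_mul, hee_idem, hxx, hxy0, hEE0]; abel
    have hq3 : (ee F y + E F x y) * (ee F y + E F x y) = ee F y + E F x y := by
      rw [mul_add, add_mul, add_mul, hee_idem, hyy, hyx0, hEE0]; abel
    have hq4 : (ee F y - E F x y) * (ee F y - E F x y) = ee F y - E F x y := by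
      rw [mul_sub, sub_mul, sub_mul, hee_idem, hyy, hyx0, hEE0]; abel
    have j1 := hψidem _ hq1
    rw [map_add, hψe] at j1
    have j2 := hψidem _ hq2
    rw [map_sub, hψe] at j2
    obtain ⟨hgg, hpg⟩ := jordan_sq hF (hee_idem (θ x)) j1 j2
    have j3 := hψidem _ hq3
    rw [map_add, hψe] at j3
    have j4 := hψidem _ hq4
    rw [map_sub, hψe] at j4
    obtain ⟨-, hpg'⟩ := jordan_sq hF (hee_idem (θ y)) j3 j4
    exact ⟨hgg, hpg, hpg'⟩
  have hrelw : ∀ {x y : X}, x < y → ∀ w, w ≠ x → w ≠ y →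
      ee F (θ w) * ψ (E F x y) + ψ (E F x y) * ee F (θ w) = 0 := by
    intro x y hxy w hwx hwy
    obtain ⟨hgg, hpg, -⟩ := hrel hxy
    have hle := le_of_lt hxy
    have hne : x ≠ y := ne_of_lt hxy
    have hq : (ee F w + ee F x + E F x y) * (ee F w + ee F x + E F x y)
        = ee F w + ee F x + E F x y := by
      have h1 : (ee F w) * E F x y = 0 := by
        rw [E_mul_E w w x y le_rfl hle, if_neg hwx]
      have h2 : (E F x y) * ee F w = 0 := by
        rw [E_mul_E x y w w hle le_rfl, if_neg (Ne.symm hwy)]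
      have h3 : (ee F x) * E F x y = E F x y := by
        rw [E_mul_E x x x y le_rfl hle, if_pos rfl]
      have h4 : (E F x y) * ee F x = 0 := by
        rw [E_mul_E x y x x hle le_rfl, if_neg (Ne.symm hne)]
      have h5 : (E F x y) * E F x y = 0 := by
        rw [E_mul_E x y x y hle hle, if_neg (Ne.symm hne)]
      simp only [mul_add, add_mul]
      rw [hee_idem, hee_idem, hee_orth hwx, hee_orth (Ne.symm hwx), h1, h2, h3, h4, h5]
      abel
    have j := hψidem _ hq
    rw [map_add, map_add, hψe, hψe] at j
    exact jordan_orth (hee_idem (θ w)) (hee_idem (θ x))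
      (hee_orth (fun hc => hwx (hθinj hc))) (hee_orth (fun hc => hwx (hθinj hc).symm))
      hpg hgg j
  have hentry : ∀ {x y : X}, x < y → ∀ p q : X, ((p, q) ≠ (θ x, θ y)) →
      ((p, q) ≠ (θ y, θ x)) → ψ (E F x y) p q = 0 := by
    intro x y hxy p q hpq1 hpq2
    have hne : x ≠ y := ne_of_lt hxy
    obtain ⟨-, hpgx, hpgy⟩ := hrel hxy
    have entry : ∀ z : X,
        (if p = z then ψ (E F x y) p q else 0) + (if q = z then ψ (E F x y) p q else 0)
        = (ee F z * ψ (E F x y) + ψ (E F x y) * ee F z) p q := by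
      intro z
      rw [IncidenceAlgebra.add_apply, ee_mul_apply, mul_ee_apply]
    by_cases hpin : p = θ x ∨ p = θ y
    · by_cases hqin : q = θ x ∨ q = θ y
      · rcases hpin with hp1 | hp1 <;> rcases hqin with hq1 | hq1
        · -- p = θx, q = θx : use the y-relation
          have h1 : (if p = θ y then ψ (E F x y) p q else 0)
              + (if q = θ y then ψ (E F x y) p q else 0) = ψ (E F x y) p q := by
            rw [entry (θ y), hpgy]
          rw [if_neg (by rw [hp1]; exact fun hc => hne (hθinj hc)),
            if_neg (by rw [hq1]; exact fun hc => hne (hθinj hc)), add_zero] at h1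
          exact h1.symm
        · exact absurd (by rw [hp1, hq1]) hpq1
        · exact absurd (by rw [hp1, hq1]) hpq2
        · -- p = θy, q = θy : use the x-relation
          have h1 : (if p = θ x then ψ (E F x y) p q else 0)
              + (if q = θ x then ψ (E F x y) p q else 0) = ψ (E F x y) p q := by
            rw [entry (θ x), hpgx]
          rw [if_neg (by rw [hp1]; exact fun hc => hne (hθinj hc).symm),
            if_neg (by rw [hq1]; exact fun hc => hne (hθinj hc).symm), add_zero] at h1
          exact h1.symm
      · -- q outside
        obtain ⟨w, hw⟩ := hθsurj q
        have hwx : w ≠ x := fun hc => hqin (Or.inl (by rw [← hw, hc]))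
        have hwy : w ≠ y := fun hc => hqin (Or.inr (by rw [← hw, hc]))
        have h1 : (if p = θ w then ψ (E F x y) p q else 0)
            + (if q = θ w then ψ (E F x y) p q else 0) = 0 := by
          rw [entry (θ w), hrelw hxy w hwx hwy, IncidenceAlgebra.zero_apply]
        rw [if_pos hw.symm] at h1
        by_cases hpw : p = θ w
        · rw [if_pos hpw] at h1
          exact half_smul hF h1
        · rw [if_neg hpw, zero_add] at h1
          exact h1
    · obtain ⟨w, hw⟩ := hθsurj p
      have hwx : w ≠ x := fun hc => hpin (Or.inl (by rw [← hw, hc]))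
      have hwy : w ≠ y := fun hc => hpin (Or.inr (by rw [← hw, hc]))
      have h1 : (if p = θ w then ψ (E F x y) p q else 0)
          + (if q = θ w then ψ (E F x y) p q else 0) = 0 := by
        rw [entry (θ w), hrelw hxy w hwx hwy, IncidenceAlgebra.zero_apply]
      rw [if_pos hw.symm] at h1
      by_cases hqw : q = θ w
      · rw [if_pos hqw] at h1
        exact half_smul hF h1
      · rw [if_neg hqw, add_zero] at h1
        exact h1
  -- Phase 3b: the shape of ψ on matrix units
  have hgsplit : ∀ {x y : X}, x < y →
      (θ x < θ y ∧ ψ (E F x y) = ψ (E F x y) (θ x) (θ y) • E F (θ x) (θ y)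
        ∧ ψ (E F x y) (θ x) (θ y) ≠ 0) ∨
      (θ y < θ x ∧ ψ (E F x y) = ψ (E F x y) (θ y) (θ x) • E F (θ y) (θ x)
        ∧ ψ (E F x y) (θ y) (θ x) ≠ 0) := by
    intro x y hxy
    have hne : x ≠ y := ne_of_lt hxy
    have hθne : θ x ≠ θ y := fun hc => hne (hθinj hc)
    have hgne : ψ (E F x y) ≠ 0 := by
      intro h
      exact E_ne_zero (le_of_lt hxy) (hψinj _ h)
    have hex2 : ∃ p q, ψ (E F x y) p q ≠ 0 := by
      by_contra hc
      push_neg at hc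
      refine hgne ?_
      ext a b _
      rw [IncidenceAlgebra.zero_apply]
      exact hc a b
    obtain ⟨p, q, hpq⟩ := hex2
    have hple : p ≤ q := le_of_ne_zero hpq
    have hcases : ((p, q) = (θ x, θ y)) ∨ ((p, q) = (θ y, θ x)) := by
      by_contra hc
      push_neg at hc
      exact hpq (hentry hxy p q hc.1 hc.2)
    rcases hcases with h1 | h1
    · rw [Prod.mk.injEq] at h1
      obtain ⟨hp, hq⟩ := h1
      left
      have hle' : θ x ≤ θ y := by rw [← hp, ← hq]; exact hple
      have hlt : θ x < θ y := lt_of_le_of_ne hle' hθne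
      refine ⟨hlt, ?_, ?_⟩
      · ext a b hab
        by_cases hc1 : (a, b) = (θ x, θ y)
        · rw [Prod.mk.injEq] at hc1
          obtain ⟨ha, hb⟩ := hc1
          rw [ha, hb, smul_apply', E_apply, if_pos ⟨rfl, rfl, le_of_lt hlt⟩, mul_one]
        · have hc2 : (a, b) ≠ (θ y, θ x) := by
            intro h'
            rw [Prod.mk.injEq] at h'
            obtain ⟨ha, hb⟩ := h'
            rw [ha, hb] at hab
            exact absurd hab (not_le_of_gt hlt)
          rw [hentry hxy a b hc1 hc2, smul_apply', E_apply, if_neg, mul_zero]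
          rintro ⟨ha, hb, -⟩
          exact hc1 (by rw [ha, hb])
      · rw [← hp, ← hq]; exact hpq
    · rw [Prod.mk.injEq] at h1
      obtain ⟨hp, hq⟩ := h1
      right
      have hle' : θ y ≤ θ x := by rw [← hp, ← hq]; exact hple
      have hlt : θ y < θ x := lt_of_le_of_ne hle' (Ne.symm hθne)
      refine ⟨hlt, ?_, ?_⟩
      · ext a b hab
        by_cases hc1 : (a, b) = (θ y, θ x)
        · rw [Prod.mk.injEq] at hc1
          obtain ⟨ha, hb⟩ := hc1
          rw [ha, hb, smul_apply', E_apply, if_pos ⟨rfl, rfl, le_of_lt hlt⟩, mul_one]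
        · have hc2 : (a, b) ≠ (θ x, θ y) := by
            intro h'
            rw [Prod.mk.injEq] at h'
            obtain ⟨ha, hb⟩ := h'
            rw [ha, hb] at hab
            exact absurd hab (not_le_of_gt hlt)
          rw [hentry hxy a b hc2 hc1, smul_apply', E_apply, if_neg, mul_zero]
          rintro ⟨ha, hb, -⟩
          exact hc1 (by rw [ha, hb])
      · rw [← hp, ← hq]; exact hpq
  -- Phase 4: Jordan chain and fork identities
  have hchain : ∀ {x y z : X}, x < y → y < z →
      ψ (E F x y) * ψ (E F y z) + ψ (E F y z) * ψ (E F x y) = ψ (E F x z) := by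
    intro x y z hxy hyz
    have hxz := lt_trans hxy hyz
    have hlxy := le_of_lt hxy
    have hlyz := le_of_lt hyz
    have hlxz := le_of_lt hxz
    have hnxy : x ≠ y := ne_of_lt hxy
    have hnyz : y ≠ z := ne_of_lt hyz
    have hnxz : x ≠ z := ne_of_lt hxz
    obtain ⟨hgg, -, hgy⟩ := hrel hxy
    obtain ⟨hhh, hhy, -⟩ := hrel hyz
    obtain ⟨hkk, -, -⟩ := hrel hxz
    have hky := hrelw hxz y (Ne.symm hnxy) hnyz
    -- products in the incidence algebra
    have p1 : (ee F y) * E F x y = 0 := by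
      rw [E_mul_E y y x y le_rfl hlxy, if_neg (Ne.symm hnxy)]
    have p2 : (E F x y) * ee F y = E F x y := by
      rw [E_mul_E x y y y hlxy le_rfl, if_pos rfl]
    have p3 : (ee F y) * E F y z = E F y z := by
      rw [E_mul_E y y y z le_rfl hlyz, if_pos rfl]
    have p4 : (E F y z) * ee F y = 0 := by
      rw [E_mul_E y z y y hlyz le_rfl, if_neg (Ne.symm hnyz)]
    have p5 : (ee F y) * E F x z = 0 := by
      rw [E_mul_E y y x z le_rfl hlxz, if_neg (Ne.symm hnxy)]
    have p6 : (E F x z) * ee F y = 0 := by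
      rw [E_mul_E x z y y hlxz le_rfl, if_neg (Ne.symm hnyz)]
    have p7 : (E F x y) * E F y z = E F x z := by
      rw [E_mul_E x y y z hlxy hlyz, if_pos rfl]
    have p8 : (E F y z) * E F x y = 0 := by
      rw [E_mul_E y z x y hlyz hlxy, if_neg (Ne.symm hnxz)]
    have p9 : (E F x y) * E F x z = 0 := by
      rw [E_mul_E x y x z hlxy hlxz, if_neg (Ne.symm hnxy)]
    have p10 : (E F x z) * E F x y = 0 := by
      rw [E_mul_E x z x y hlxz hlxy, if_neg (Ne.symm hnxz)]
    have p11 : (E F y z) * E F x z = 0 := by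
      rw [E_mul_E y z x z hlyz hlxz, if_neg (Ne.symm hnxz)]
    have p12 : (E F x z) * E F y z = 0 := by
      rw [E_mul_E x z y z hlxz hlyz, if_neg (Ne.symm hnyz)]
    have p13 : (E F x y) * E F x y = 0 := by
      rw [E_mul_E x y x y hlxy hlxy, if_neg (Ne.symm hnxy)]
    have p14 : (E F y z) * E F y z = 0 := by
      rw [E_mul_E y z y z hlyz hlyz, if_neg (Ne.symm hnyz)]
    have p15 : (E F x z) * E F x z = 0 := by
      rw [E_mul_E x z x z hlxz hlxz, if_neg (Ne.symm hnxz)]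
    have hq1 : (ee F y + E F x y + E F y z + E F x z) * (ee F y + E F x y + E F y z + E F x z)
        = ee F y + E F x y + E F y z + E F x z := by
      simp only [mul_add, add_mul]
      rw [hee_idem, p1, p2, p3, p4, p5, p6, p7, p8, p9, p10, p11, p12, p13, p14, p15]
      abel
    have hq2 : (ee F y + E F x y - E F y z - E F x z) * (ee F y + E F x y - E F y z - E F x z)
        = ee F y + E F x y - E F y z - E F x z := by
      simp only [mul_add, add_mul, mul_sub, sub_mul]
      rw [hee_idem, p1, p2, p3, p4, p5, p6, p7, p8, p9, p10, p11, p12, p13, p14, p15]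
      abel
    have hq3 : (ee F y - E F x y + E F y z - E F x z) * (ee F y - E F x y + E F y z - E F x z)
        = ee F y - E F x y + E F y z - E F x z := by
      simp only [mul_add, add_mul, mul_sub, sub_mul]
      rw [hee_idem, p1, p2, p3, p4, p5, p6, p7, p8, p9, p10, p11, p12, p13, p14, p15]
      abel
    have j1 := hψidem _ hq1
    rw [map_add, map_add, map_add, hψe] at j1
    have j2 := hψidem _ hq2
    rw [map_sub, map_sub, map_add, hψe] at j2
    have j3 := hψidem _ hq3
    rw [map_sub, map_add, map_sub, hψe] at j3
    exact jordan_chain hF (hee_idem (θ y)) hgy hhy hky hgg hhh hkk j1 j2 j3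
  have hfork : ∀ {x y z : X}, x < y → x < z → y ≠ z →
      ψ (E F x y) * ψ (E F x z) + ψ (E F x z) * ψ (E F x y) = 0 := by
    intro x y z hxy hxz hnyz
    have hlxy := le_of_lt hxy
    have hlxz := le_of_lt hxz
    have hnxy : x ≠ y := ne_of_lt hxy
    have hnxz : x ≠ z := ne_of_lt hxz
    obtain ⟨hgg, hgx, -⟩ := hrel hxy
    obtain ⟨hhh, hhx, -⟩ := hrel hxz
    have p1 : (ee F x) * E F x y = E F x y := by
      rw [E_mul_E x x x y le_rfl hlxy, if_pos rfl]
    have p2 : (E F x y) * ee F x = 0 := by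
      rw [E_mul_E x y x x hlxy le_rfl, if_neg (Ne.symm hnxy)]
    have p3 : (ee F x) * E F x z = E F x z := by
      rw [E_mul_E x x x z le_rfl hlxz, if_pos rfl]
    have p4 : (E F x z) * ee F x = 0 := by
      rw [E_mul_E x z x x hlxz le_rfl, if_neg (Ne.symm hnxz)]
    have p5 : (E F x y) * E F x z = 0 := by
      rw [E_mul_E x y x z hlxy hlxz, if_neg (Ne.symm hnxy)]
    have p6 : (E F x z) * E F x y = 0 := by
      rw [E_mul_E x z x y hlxz hlxy, if_neg (Ne.symm hnxz)]
    have p7 : (E F x y) * E F x y = 0 := by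
      rw [E_mul_E x y x y hlxy hlxy, if_neg (Ne.symm hnxy)]
    have p8 : (E F x z) * E F x z = 0 := by
      rw [E_mul_E x z x z hlxz hlxz, if_neg (Ne.symm hnxz)]
    have hq : (ee F x + E F x y + E F x z) * (ee F x + E F x y + E F x z)
        = ee F x + E F x y + E F x z := by
      simp only [mul_add, add_mul]
      rw [hee_idem, p1, p2, p3, p4, p5, p6, p7, p8]
      abel
    have j := hψidem _ hq
    rw [map_add, map_add, hψe] at j
    exact jordan_two (hee_idem (θ x)) hgx hhx hgg hhh j
  have hfork' : ∀ {x y z : X}, y < x → z < x → y ≠ z →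
      ψ (E F y x) * ψ (E F z x) + ψ (E F z x) * ψ (E F y x) = 0 := by
    intro x y z hyx hzx hnyz
    have hlyx := le_of_lt hyx
    have hlzx := le_of_lt hzx
    have hnyx : y ≠ x := ne_of_lt hyx
    have hnzx : z ≠ x := ne_of_lt hzx
    obtain ⟨hgg, -, hgx⟩ := hrel hyx
    obtain ⟨hhh, -, hhx⟩ := hrel hzx
    have p1 : (ee F x) * E F y x = 0 := by
      rw [E_mul_E x x y x le_rfl hlyx, if_neg (Ne.symm hnyx)]
    have p2 : (E F y x) * ee F x = E F y x := by
      rw [E_mul_E y x x x hlyx le_rfl, if_pos rfl]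
    have p3 : (ee F x) * E F z x = 0 := by
      rw [E_mul_E x x z x le_rfl hlzx, if_neg (Ne.symm hnzx)]
    have p4 : (E F z x) * ee F x = E F z x := by
      rw [E_mul_E z x x x hlzx le_rfl, if_pos rfl]
    have p5 : (E F y x) * E F z x = 0 := by
      rw [E_mul_E y x z x hlyx hlzx, if_neg (Ne.symm hnzx)]
    have p6 : (E F z x) * E F y x = 0 := by
      rw [E_mul_E z x y x hlzx hlyx, if_neg (Ne.symm hnyx)]
    have p7 : (E F y x) * E F y x = 0 := by
      rw [E_mul_E y x y x hlyx hlyx, if_neg (Ne.symm hnyx)]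
    have p8 : (E F z x) * E F z x = 0 := by
      rw [E_mul_E z x z x hlzx hlzx, if_neg (Ne.symm hnzx)]
    have hq : (ee F x + E F y x + E F z x) * (ee F x + E F y x + E F z x)
        = ee F x + E F y x + E F z x := by
      simp only [mul_add, add_mul]
      rw [hee_idem, p1, p2, p3, p4, p5, p6, p7, p8]
      abel
    have j := hψidem _ hq
    rw [map_add, map_add, hψe] at j
    exact jordan_two (hee_idem (θ x)) hgx hhx hgg hhh j
  -- Phase 5: sign coherence
  have hdichot : ∀ {x y : X}, x < y → θ x < θ y ∨ θ y < θ x := by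
    intro x y hxy
    rcases hgsplit hxy with h | h
    · exact Or.inl h.1
    · exact Or.inr h.1
  have hEz : ∀ {x z : X}, x < z → ψ (E F x z) ≠ 0 := by
    intro x z hxz h
    exact E_ne_zero (le_of_lt hxz) (hψinj _ h)
  have coh1 : ∀ {x y z : X}, x < y → y < z → θ x < θ y → θ y < θ z := by
    intro x y z hxy hyz h1
    by_contra hcon
    have h2 : θ z < θ y := (hdichot hyz).resolve_left hcon
    obtain ⟨-, he1, -⟩ := (hgsplit hxy).resolve_right (fun h => lt_asymm h1 h.1)
    obtain ⟨-, he2, -⟩ := (hgsplit hyz).resolve_left (fun h => lt_asymm h2 h.1)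
    have hc := hchain hxy hyz
    rw [he1, he2, smul_mul_smul_comm, smul_mul_smul_comm,
      E_mul_E _ _ _ _ (le_of_lt h1) (le_of_lt h2),
      E_mul_E _ _ _ _ (le_of_lt h2) (le_of_lt h1),
      if_neg (fun hc' => (ne_of_lt hyz) (hθinj hc')),
      if_neg (fun hc' => (ne_of_lt hxy) (hθinj hc').symm),
      smul_zero, smul_zero, add_zero] at hc
    exact hEz (lt_trans hxy hyz) hc.symm
  have coh1' : ∀ {x y z : X}, x < y → y < z → θ y < θ x → θ z < θ y := by
    intro x y z hxy hyz h1
    by_contra hcon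
    have h2 : θ y < θ z := (hdichot hyz).resolve_right hcon
    obtain ⟨-, he1, -⟩ := (hgsplit hxy).resolve_left (fun h => lt_asymm h1 h.1)
    obtain ⟨-, he2, -⟩ := (hgsplit hyz).resolve_right (fun h => lt_asymm h2 h.1)
    have hc := hchain hxy hyz
    rw [he1, he2, smul_mul_smul_comm, smul_mul_smul_comm,
      E_mul_E _ _ _ _ (le_of_lt h1) (le_of_lt h2),
      E_mul_E _ _ _ _ (le_of_lt h2) (le_of_lt h1),
      if_neg (fun hc' => (ne_of_lt hxy) (hθinj hc')),
      if_neg (fun hc' => (ne_of_lt hyz) (hθinj hc').symm),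
      smul_zero, smul_zero, add_zero] at hc
    exact hEz (lt_trans hxy hyz) hc.symm
  have coh2 : ∀ {x y z : X}, x < y → x < z → y ≠ z → θ x < θ y → θ x < θ z := by
    intro x y z hxy hxz hnyz h1
    by_contra hcon
    have h2 : θ z < θ x := (hdichot hxz).resolve_left hcon
    obtain ⟨-, he1, hc1⟩ := (hgsplit hxy).resolve_right (fun h => lt_asymm h1 h.1)
    obtain ⟨-, he2, hc2⟩ := (hgsplit hxz).resolve_left (fun h => lt_asymm h2 h.1)
    have hc := hfork hxy hxz hnyz
    rw [he1, he2, smul_mul_smul_comm, smul_mul_smul_comm,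
      E_mul_E _ _ _ _ (le_of_lt h1) (le_of_lt h2),
      E_mul_E _ _ _ _ (le_of_lt h2) (le_of_lt h1),
      if_neg (fun hc' => hnyz (hθinj hc')), if_pos rfl, smul_zero, zero_add] at hc
    rcases smul_eq_zero.1 hc with h | h
    · exact (mul_ne_zero hc2 hc1) h
    · exact E_ne_zero (le_of_lt (lt_trans h2 h1)) h
  have coh2' : ∀ {x y z : X}, y < x → z < x → y ≠ z → θ y < θ x → θ z < θ x := by
    intro x y z hyx hzx hnyz h1
    by_contra hcon
    have h2 : θ x < θ z := (hdichot hzx).resolve_left hcon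
    obtain ⟨-, he1, hc1⟩ := (hgsplit hyx).resolve_right (fun h => lt_asymm h1 h.1)
    obtain ⟨-, he2, hc2⟩ := (hgsplit hzx).resolve_left (fun h => lt_asymm h2 h.1)
    have hc := hfork' hyx hzx hnyz
    rw [he1, he2, smul_mul_smul_comm, smul_mul_smul_comm,
      E_mul_E _ _ _ _ (le_of_lt h1) (le_of_lt h2),
      E_mul_E _ _ _ _ (le_of_lt h2) (le_of_lt h1),
      if_pos rfl, if_neg (fun hc' => hnyz (hθinj hc').symm), smul_zero, add_zero] at hc
    rcases smul_eq_zero.1 hc with h | h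
    · exact (mul_ne_zero hc1 hc2) h
    · exact E_ne_zero (le_of_lt (lt_trans h1 h2)) h
  -- the one-step sign transfer
  have hstep : ∀ {a b c d : X}, a < b → c < d → (a = c ∨ a = d ∨ b = c ∨ b = d) →
      θ a < θ b → θ c < θ d := by
    intro a b c d hab hcd hsh h1
    rcases hsh with h | h | h | h
    · subst h
      by_cases hbd : b = d
      · subst hbd; exact h1
      · exact coh2 hab hcd hbd h1
    · subst h
      by_contra hcon
      have h2 : θ a < θ c := (hdichot hcd).resolve_left hcon
      exact lt_asymm h1 (coh1' hcd hab h2)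
    · subst h
      exact coh1 hab hcd h1
    · subst h
      by_cases hac : a = c
      · subst hac; exact h1
      · exact coh2' hab hcd hac h1
  have hstepN : ∀ {a b c d : X}, a < b → c < d → (a = c ∨ a = d ∨ b = c ∨ b = d) →
      θ b < θ a → θ d < θ c := by
    intro a b c d hab hcd hsh h1
    by_contra hcon
    have h2 : θ c < θ d := (hdichot hcd).resolve_right hcon
    have hsh' : c = a ∨ c = b ∨ d = a ∨ d = b := by
      rcases hsh with h | h | h | h
      · exact Or.inl h.symm
      · exact Or.inr (Or.inr (Or.inl h.symm))
      · exact Or.inr (Or.inl h.symm)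
      · exact Or.inr (Or.inr (Or.inr h.symm))
    have h3 : θ a < θ b := hstep hcd hab hsh' h2
    exact lt_asymm h1 h3
  have hψe' : ∀ x : X, ψ (E F x x) = E F (θ x) (θ x) := hψe
  have hcxx : ∀ x : X, ψ (E F x x) (θ x) (θ x) = 1 := by
    intro x
    rw [hψe' x]
    simp [E_apply]
  have hone : ∀ x : X, (E F (θ x) (θ x)) (θ x) (θ x) = 1 := by
    intro x
    simp [E_apply]
  have hback : ∀ t, φ t = v * ψ t * u := by
    intro t
    rw [hψ]
    have h1 : v * (u * φ t * v) * u = v * u * φ t * (v * u) := by noncomm_ring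
    rw [h1, hvu, one_mul, mul_one]
  by_cases hall : ∀ p q : X, p < q → θ p < θ q
  · -- multiplicative case
    have hEc : ∀ x y : X, x ≤ y →
        ψ (E F x y) = ψ (E F x y) (θ x) (θ y) • E F (θ x) (θ y) := by
      intro x y hxy
      rcases lt_or_eq_of_le hxy with hlt | heq
      · exact ((hgsplit hlt).resolve_right (fun h => lt_asymm (hall x y hlt) h.1)).2.1
      · subst heq
        rw [hψe' x, hone x, one_smul]
    have hmono : ∀ {x y : X}, x ≤ y → θ x ≤ θ y := by
      intro x y hxy
      rcases lt_or_eq_of_le hxy with hlt | heq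
      · exact le_of_lt (hall x y hlt)
      · subst heq; exact le_rfl
    have hco : ∀ x y z : X, x ≤ y → y ≤ z →
        ψ (E F x z) (θ x) (θ z) = ψ (E F x y) (θ x) (θ y) * ψ (E F y z) (θ y) (θ z) := by
      intro x y z hxy hyz
      rcases lt_or_eq_of_le hxy with hlt1 | heq1
      · rcases lt_or_eq_of_le hyz with hlt2 | heq2
        · have hchn := hchain hlt1 hlt2
          rw [hEc x y (le_of_lt hlt1), hEc y z (le_of_lt hlt2),
            smul_mul_smul_comm, smul_mul_smul_comm,
            E_mul_E _ _ _ _ (hmono (le_of_lt hlt1)) (hmono (le_of_lt hlt2)), if_pos rfl,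
            E_mul_E _ _ _ _ (hmono (le_of_lt hlt2)) (hmono (le_of_lt hlt1)),
            if_neg (fun hc' => (ne_of_lt (lt_trans hlt1 hlt2)) (hθinj hc').symm),
            smul_zero, add_zero] at hchn
          have hval := congrArg (fun m => m (θ x) (θ z)) hchn
          simp only [smul_apply', E_apply] at hval
          rw [if_pos ⟨trivial, trivial, hmono (le_of_lt (lt_trans hlt1 hlt2))⟩, mul_one] at hval
          exact hval.symm
        · subst heq2
          rw [hcxx y, mul_one]
      · subst heq1
        rw [hcxx x, one_mul]
    have hψmul := key_mul ψ θ hθinj (fun x y => ψ (E F x y) (θ x) (θ y)) hEc hmono hco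
    left
    intro a b
    rw [hback (a * b), hback a, hback b, hψmul a b]
    calc v * (ψ a * ψ b) * u = v * ψ a * (u * v) * ψ b * u := by rw [huv]; noncomm_ring
    _ = v * ψ a * u * (v * ψ b * u) := by noncomm_ring
  · -- antimultiplicative case
    push_neg at hall
    obtain ⟨p0, q0, hp0q0, hnot⟩ := hall
    have hbase0 : θ q0 < θ p0 := (hdichot hp0q0).resolve_left hnot
    have hprop : ∀ w : X, ∀ p q : X, p < q → (w = p ∨ w = q) → θ q < θ p := by
      intro w
      have hpath := hconn p0 w
      induction hpath with
      | refl =>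
        intro p q hpq hsh
        refine hstepN hp0q0 hpq ?_ hbase0
        rcases hsh with h | h
        · exact Or.inl h
        · exact Or.inr (Or.inl h)
      | @tail b c hst hcomp ih =>
        intro p q hpq hsh
        rcases eq_or_ne b c with heq | hne
        · subst heq
          exact ih p q hpq hsh
        · have hbc : b < c ∨ c < b := by
            rcases hcomp with h | h
            · exact Or.inl (lt_of_le_of_ne h hne)
            · exact Or.inr (lt_of_le_of_ne h hne.symm)
          rcases hbc with h | h
          · refine hstepN h hpq ?_ (ih b c h (Or.inl rfl))
            rcases hsh with h' | h'
            · exact Or.inr (Or.inr (Or.inl h'))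
            · exact Or.inr (Or.inr (Or.inr h'))
          · refine hstepN h hpq ?_ (ih c b h (Or.inr rfl))
            rcases hsh with h' | h'
            · exact Or.inl h'
            · exact Or.inr (Or.inl h')
    have hallN : ∀ p q : X, p < q → θ q < θ p := fun p q h => hprop p p q h (Or.inl rfl)
    have hEc : ∀ x y : X, x ≤ y →
        ψ (E F x y) = ψ (E F x y) (θ y) (θ x) • E F (θ y) (θ x) := by
      intro x y hxy
      rcases lt_or_eq_of_le hxy with hlt | heq
      · exact ((hgsplit hlt).resolve_left (fun h => lt_asymm (hallN x y hlt) h.1)).2.1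
      · subst heq
        rw [hψe' x, hone x, one_smul]
    have hmono' : ∀ {x y : X}, x ≤ y → θ y ≤ θ x := by
      intro x y hxy
      rcases lt_or_eq_of_le hxy with hlt | heq
      · exact le_of_lt (hallN x y hlt)
      · subst heq; exact le_rfl
    have hco : ∀ x y z : X, x ≤ y → y ≤ z →
        ψ (E F x z) (θ z) (θ x) = ψ (E F x y) (θ y) (θ x) * ψ (E F y z) (θ z) (θ y) := by
      intro x y z hxy hyz
      rcases lt_or_eq_of_le hxy with hlt1 | heq1
      · rcases lt_or_eq_of_le hyz with hlt2 | heq2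
        · have hchn := hchain hlt1 hlt2
          rw [hEc x y (le_of_lt hlt1), hEc y z (le_of_lt hlt2),
            smul_mul_smul_comm, smul_mul_smul_comm,
            E_mul_E _ _ _ _ (hmono' (le_of_lt hlt1)) (hmono' (le_of_lt hlt2)),
            if_neg (fun hc' => (ne_of_lt (lt_trans hlt1 hlt2)) (hθinj hc')),
            E_mul_E _ _ _ _ (hmono' (le_of_lt hlt2)) (hmono' (le_of_lt hlt1)), if_pos rfl,
            smul_zero, zero_add] at hchn
          have hval := congrArg (fun m => m (θ z) (θ x)) hchn
          simp only [smul_apply', E_apply] at hval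
          rw [if_pos ⟨trivial, trivial, hmono' (le_of_lt (lt_trans hlt1 hlt2))⟩, mul_one] at hval
          rw [← hval]
          exact mul_comm _ _
        · subst heq2
          rw [hcxx y, mul_one]
      · subst heq1
        rw [hcxx x, one_mul]
    have hψanti := key_antimul ψ θ hθinj (fun x y => ψ (E F x y) (θ y) (θ x)) hEc hmono' hco
    right
    intro a b
    rw [hback (a * b), hback a, hback b, hψanti a b]
    calc v * (ψ b * ψ a) * u = v * ψ b * (u * v) * ψ a * u := by rw [huv]; noncomm_ring
    _ = v * ψ b * u * (v * ψ a * u) := by noncomm_ring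
end

section
/- Let X be a finite connected poset, F a field with char(F) = 2, and φ a Lie automorphism of I(X,F). Then the following are equivalent: (1) φ(f²) = φ(f)² for all f ∈ I(X,F); (2) φ preserves idempotents; (3) φ(e_x) is an idempotent for every x ∈ X. -/
open IncidenceAlgebra Finset

/-- The standard basis element `e_{xy}` of the incidence algebra (for `x ≤ y`):
the function taking value `1` at `(x, y)` and `0` elsewhere. -/
def eSingle {R : Type*} [Zero R] [One R] {X : Type*} [PartialOrder X] [DecidableEq X]
    (x y : X) (hxy : x ≤ y) : IncidenceAlgebra R X where
  toFun u v := if u = x ∧ v = y then 1 else 0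
  eq_zero_of_not_le' u v huv := by
    show (if u = x ∧ v = y then (1 : R) else 0) = 0
    split_ifs with hc
    · obtain ⟨rfl, rfl⟩ := hc; exact absurd hxy huv
    · rfl

section Aux

variable {X : Type*} [PartialOrder X] [Fintype X] [LocallyFiniteOrder X] [DecidableEq X]
  {F : Type*} [Field F]

lemma eSingle_apply (x y : X) (h : x ≤ y) (u v : X) :
    eSingle (R := F) x y h u v = if u = x ∧ v = y then 1 else 0 := rfl

lemma eSingle_mul_eSingle (x y z : X) (hxy : x ≤ y) (hyz : y ≤ z) :
    eSingle (R := F) x y hxy * eSingle y z hyz = eSingle x z (hxy.trans hyz) := by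
  ext a b hab
  rw [mul_apply, eSingle_apply]
  by_cases h : a = x ∧ b = z
  · obtain ⟨rfl, rfl⟩ := h
    rw [if_pos ⟨rfl, rfl⟩, Finset.sum_eq_single y]
    · simp [eSingle_apply]
    · intro w _ hne; simp [eSingle_apply, hne]
    · intro hy; exact absurd (Finset.mem_Icc.2 ⟨hxy, hyz⟩) hy
  · rw [if_neg h]
    refine Finset.sum_eq_zero fun w _ => ?_
    rw [eSingle_apply, eSingle_apply]
    by_cases h1 : a = x ∧ w = y
    · by_cases h2 : w = y ∧ b = z
      · exact absurd ⟨h1.1, h2.2⟩ h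
      · rw [if_neg h2, mul_zero]
    · rw [if_neg h1, zero_mul]

lemma eSingle_mul_eSingle_of_ne {x y w z : X} (hne : y ≠ w) (hxy : x ≤ y) (hwz : w ≤ z) :
    eSingle (R := F) x y hxy * eSingle w z hwz = 0 := by
  ext a b _
  rw [mul_apply, IncidenceAlgebra.zero_apply]
  refine Finset.sum_eq_zero fun v _ => ?_
  rw [eSingle_apply, eSingle_apply]
  by_cases h1 : a = x ∧ v = y
  · by_cases h2 : v = w ∧ b = z
    · exact absurd (h1.2.symm.trans h2.1) hne
    · rw [if_neg h2, mul_zero]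
  · rw [if_neg h1, zero_mul]

lemma comm_diag (f g : IncidenceAlgebra F X) (z : X) : (f * g - g * f) z z = 0 := by
  rw [IncidenceAlgebra.sub_apply, mul_apply, mul_apply, Finset.Icc_self, Finset.sum_singleton,
    Finset.sum_singleton, mul_comm, sub_self]

lemma ia_sum_apply {ι : Type*} (s : Finset ι) (f : ι → IncidenceAlgebra F X) (a b : X) :
    (∑ i ∈ s, f i) a b = ∑ i ∈ s, f i a b := by
  induction s using Finset.cons_induction with
  | empty => rfl
  | cons i s hi ih => rw [Finset.sum_cons, Finset.sum_cons, IncidenceAlgebra.add_apply, ih]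

lemma mul_eSingle_diag (g : IncidenceAlgebra F X) (w a b : X) :
    (g * eSingle (R := F) w w le_rfl) a b = if b = w then g a b else 0 := by
  rw [mul_apply]
  by_cases hbw : b = w
  · subst hbw
    rw [if_pos rfl]
    by_cases hab : a ≤ b
    · rw [Finset.sum_eq_single b]
      · simp [eSingle_apply]
      · intro v _ hne; simp [eSingle_apply, hne]
      · intro hb; exact absurd (Finset.mem_Icc.2 ⟨hab, le_rfl⟩) hb
    · rw [apply_eq_zero_of_not_le hab]
      refine Finset.sum_eq_zero fun v hv => ?_
      rw [Finset.mem_Icc] at hv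
      exact absurd (hv.1.trans hv.2) hab
  · rw [if_neg hbw]
    refine Finset.sum_eq_zero fun v _ => ?_
    rw [eSingle_apply, if_neg (fun h => hbw h.2), mul_zero]

lemma eSingle_diag_mul (g : IncidenceAlgebra F X) (w a b : X) :
    (eSingle (R := F) w w le_rfl * g) a b = if a = w then g a b else 0 := by
  rw [mul_apply]
  by_cases haw : a = w
  · subst haw
    rw [if_pos rfl]
    by_cases hab : a ≤ b
    · rw [Finset.sum_eq_single a]
      · simp [eSingle_apply]
      · intro v _ hne; simp [eSingle_apply, hne]
      · intro ha; exact absurd (Finset.mem_Icc.2 ⟨le_rfl, hab⟩) ha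
    · rw [apply_eq_zero_of_not_le hab]
      refine Finset.sum_eq_zero fun v hv => ?_
      rw [Finset.mem_Icc] at hv
      exact absurd (hv.1.trans hv.2) hab
  · rw [if_neg haw]
    refine Finset.sum_eq_zero fun v _ => ?_
    rw [eSingle_apply, if_neg (fun h => haw h.1), zero_mul]

open scoped Classical in
lemma ia_eq_sum (f : IncidenceAlgebra F X) :
    f = ∑ p : X × X, if h : p.1 ≤ p.2 then f p.1 p.2 • eSingle p.1 p.2 h else 0 := by
  ext a b hab
  rw [ia_sum_apply, Finset.sum_eq_single (a, b)]
  · rw [dif_pos hab, constSMul_apply, eSingle_apply, if_pos ⟨rfl, rfl⟩, smul_eq_mul, mul_one]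
  · intro p _ hne
    by_cases h : p.1 ≤ p.2
    · rw [dif_pos h, constSMul_apply, eSingle_apply, if_neg, smul_zero]
      rintro ⟨rfl, rfl⟩; exact hne rfl
    · rw [dif_neg h, IncidenceAlgebra.zero_apply]
  · intro h; exact absurd (Finset.mem_univ _) h

end Aux
/-- for a Lie automorphism of the incidence algebra of a finite connected poset
over a field of characteristic 2, the following are equivalent: it preserves squares; it
preserves idempotents; it sends each `e_x` to an idempotent. -/
theorem stmt_5 {X : Type*} [PartialOrder X] [Fintype X] [LocallyFiniteOrder X] [DecidableEq X]
    {F : Type*} [Field F] (hchar : ringChar F = 2)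
    (hconn : PosetConnected X)
    (φ : IncidenceAlgebra F X →ₗ[F] IncidenceAlgebra F X)
    (hbij : Function.Bijective φ)
    (hLie : ∀ f g : IncidenceAlgebra F X, φ (f * g - g * f) = φ f * φ g - φ g * φ f) :
    List.TFAE
      [∀ f : IncidenceAlgebra F X, φ (f * f) = φ f * φ f,
       ∀ f : IncidenceAlgebra F X, f * f = f → φ f * φ f = φ f,
       ∀ x : X, φ (eSingle x x le_rfl) * φ (eSingle x x le_rfl) = φ (eSingle x x le_rfl)] := by
  have h2F : (2 : F) = 0 := by
    haveI : CharP F 2 := hchar ▸ ringChar.charP F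
    exact_mod_cast (CharP.cast_eq_zero F 2)
  have hchar2 : ∀ a : IncidenceAlgebra F X, a + a = 0 := fun a => by
    rw [← two_smul F a, h2F, zero_smul]
  tfae_have 1 → 2 := by
    intro h f hf
    rw [← h, hf]
  tfae_have 2 → 3 := by
    intro h x
    exact h _ (eSingle_mul_eSingle x x x le_rfl le_rfl)
  tfae_have 3 → 1 := by
    intro h3
    set P : IncidenceAlgebra F X → Prop := fun g => φ (g * g) = φ g * φ g with hP
    have P0 : P 0 := by simp [hP]
    have Padd : ∀ a b : IncidenceAlgebra F X, P a → P b → P (a + b) := by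
      intro a b ha hb
      have e1 : (a + b) * (a + b) = a * a + ((a * b - b * a) + (b * a + b * a)) + b * b := by
        noncomm_ring
      have e2 : (φ a + φ b) * (φ a + φ b)
          = φ a * φ a + ((φ a * φ b - φ b * φ a) + (φ b * φ a + φ b * φ a)) + φ b * φ b := by
        noncomm_ring
      show φ ((a + b) * (a + b)) = φ (a + b) * φ (a + b)
      rw [map_add φ a b, e2, hchar2, add_zero, e1, hchar2, add_zero, map_add, map_add,
        hLie, ha, hb]
    have Pe : ∀ (u v : X) (h : u ≤ v), P (eSingle u v h) := by
      intro u v h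
      by_cases huv : u = v
      · subst huv
        show φ (eSingle u u h * eSingle u u h) = φ (eSingle u u h) * φ (eSingle u u h)
        rw [eSingle_mul_eSingle u u u h h]
        exact (h3 u).symm
      · -- the nilpotent case
        have hsq : eSingle (R := F) u v h * eSingle u v h = 0 :=
          eSingle_mul_eSingle_of_ne (fun hq => huv hq.symm) h h
        show φ (eSingle u v h * eSingle u v h) = φ (eSingle u v h) * φ (eSingle u v h)
        rw [hsq, map_zero]
        have hce : eSingle (R := F) u u le_rfl * eSingle u v h
            - eSingle u v h * eSingle u u le_rfl = eSingle u v h := by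
          rw [eSingle_mul_eSingle u u v le_rfl h,
            eSingle_mul_eSingle_of_ne (fun hq : v = u => huv hq.symm) h le_rfl, sub_zero]
        have hdiag : ∀ z, (φ (eSingle u v h)) z z = 0 := by
          intro z
          have hc := comm_diag (φ (eSingle u u le_rfl)) (φ (eSingle u v h)) z
          rwa [← hLie, hce] at hc
        have hcentral : ∀ g : IncidenceAlgebra F X,
            (φ (eSingle u v h) * φ (eSingle u v h)) * g
              = g * (φ (eSingle u v h) * φ (eSingle u v h)) := by
          intro g
          obtain ⟨p, rfl⟩ := hbij.2 g
          set k := eSingle u v h * p - p * eSingle u v h with hk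
          have h1 : φ (eSingle u v h) * φ p - φ p * φ (eSingle u v h) = φ k := (hLie _ _).symm
          have h3' : eSingle u v h * k - k * eSingle u v h = 0 := by
            have e3 : eSingle (R := F) u v h * k - k * eSingle u v h
                = (eSingle u v h * eSingle u v h) * p + p * (eSingle u v h * eSingle u v h)
                  - (eSingle u v h * (p * eSingle u v h)
                    + eSingle u v h * (p * eSingle u v h)) := by
              rw [hk]; noncomm_ring
            rw [e3, hsq, zero_mul, mul_zero, zero_add, hchar2, sub_zero]
          have h4 : φ (eSingle u v h) * φ k + φ k * φ (eSingle u v h) = 0 := by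
            have e4 : φ (eSingle u v h) * φ k + φ k * φ (eSingle u v h)
                = (φ (eSingle u v h) * φ k - φ k * φ (eSingle u v h))
                  + (φ k * φ (eSingle u v h) + φ k * φ (eSingle u v h)) := by
              noncomm_ring
            rw [e4, ← hLie, h3', map_zero, hchar2, add_zero]
          have h5 : (φ (eSingle u v h) * φ (eSingle u v h)) * φ p
              - φ p * (φ (eSingle u v h) * φ (eSingle u v h))
              = φ (eSingle u v h) * (φ (eSingle u v h) * φ p - φ p * φ (eSingle u v h))
                + (φ (eSingle u v h) * φ p - φ p * φ (eSingle u v h)) * φ (eSingle u v h) := by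
            noncomm_ring
          rw [h1, h4] at h5
          exact sub_eq_zero.1 h5
        have hcc : φ (eSingle u v h) * φ (eSingle u v h) = 0 := by
          ext a b hab
          rw [IncidenceAlgebra.zero_apply]
          by_cases hab' : a = b
          · subst hab'
            rw [mul_apply, Finset.Icc_self, Finset.sum_singleton, hdiag, zero_mul]
          · have h6 : ((φ (eSingle u v h) * φ (eSingle u v h)) * eSingle (R := F) b b le_rfl) a b
                = (eSingle (R := F) b b le_rfl * (φ (eSingle u v h) * φ (eSingle u v h))) a b := by
              rw [hcentral]
            rw [mul_eSingle_diag, eSingle_diag_mul, if_pos rfl, if_neg hab'] at h6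
            exact h6
        rw [hcc]
    intro f
    have hf := ia_eq_sum f
    rw [hf]
    exact Finset.sum_induction _ P Padd P0 (fun p _ => by
      by_cases hp : p.1 ≤ p.2
      · rw [dif_pos hp]
        show φ ((f p.1 p.2 • eSingle p.1 p.2 hp) * (f p.1 p.2 • eSingle p.1 p.2 hp))
          = φ (f p.1 p.2 • eSingle p.1 p.2 hp) * φ (f p.1 p.2 • eSingle p.1 p.2 hp)
        rw [smul_mul_assoc, mul_smul_comm, map_smul, map_smul, map_smul, Pe p.1 p.2 hp,
          smul_mul_assoc, mul_smul_comm]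
      · rw [dif_neg hp]; exact P0)
  tfae_finish
end
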